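/- The space LF^ℕ of locally finite quivers on ℕ, equipped with the subspace topology inherited from the weak topology on AF^ℕ, is not a Polish space: it is not a second countable topological space whose topology is induced by a complete metric. -/

import Mathlib

open Topology


-- Mutation of a quiver at a vertex `x`.
open Classical in
noncomputable def mutateFun {X : Type*} (x : X) (Q : X → X → ℤ) : X → X → ℤ :=
  fun v w =>
    if v = x ∨ w = x then - Q v w
    else Q v w + Q v x * max (Q x w) 0 + max (- Q v x) 0 * Q x w

-- Restriction of a quiver to a set of vertices `V`.
open Classical in
noncomputable def restrictFun {X : Type*} (V : Set X) (Q : X → X → ℤ) : X → X → ℤ :=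
  fun a b => if a ∈ V ∧ b ∈ V then Q a b else 0

-- Overfill of a quiver on a set of vertices `V`.
open Classical in
noncomputable def overfillFun {X : Type*} (V : Set X) (Q : X → X → ℤ) : X → X → ℤ :=
  fun a b => if a ∈ V ∨ b ∈ V then Q a b else 0

/-- The set of arrow finite quivers on `X`: skew-symmetric integer matrices. -/
def AF (X : Type*) : Type _ := {Q : X → X → ℤ // ∀ a b, Q a b = - Q b a}

/-- The basic set `U_{Q,V}`. -/
def Uset {X : Type*} (Q : AF X) (V : Set X) : Set (AF X) :=
  {Q' | restrictFun V Q'.1 = restrictFun V Q.1}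

/-- The basic set `W_{Q,V}`. -/
def Wset {X : Type*} (Q : AF X) (V : Set X) : Set (AF X) :=
  {Q' | overfillFun V Q'.1 = overfillFun V Q.1}

def UBasis (X : Type*) : Set (Set (AF X)) :=
  {U | ∃ (Q : AF X) (V : Set X), V.Finite ∧ U = Uset Q V}

def WBasis (X : Type*) : Set (Set (AF X)) :=
  {U | ∃ (Q : AF X) (V : Set X), V.Finite ∧ U = Wset Q V}

/-- The weak topology on `AF X`, generated by the sets `U_{Q,V}` with `V` finite. -/
def weakTop (X : Type*) : TopologicalSpace (AF X) :=
  TopologicalSpace.generateFrom (UBasis X)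

/-- The strong topology on `AF X`, generated by the sets `W_{Q,V}` with `V` finite. -/
def strongTop (X : Type*) : TopologicalSpace (AF X) :=
  TopologicalSpace.generateFrom (WBasis X)

/-- Locally finite quivers. -/
def LFset (X : Type*) : Set (AF X) := {Q | ∀ x : X, {y : X | Q.1 x y ≠ 0}.Finite}

/-- Finite quivers: those with finite support. -/
def FinSet (X : Type*) : Set (AF X) := {Q | {x : X | ∃ y, Q.1 x y ≠ 0}.Finite}

open Classical in
noncomputable def addEdge (Q : AF ℕ) (a b : ℕ) (hab : a ≠ b) : AF ℕ :=
  ⟨fun v w => if v = a ∧ w = b then 1 else if v = b ∧ w = a then -1 else Q.1 v w, by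
    intro v w
    have h := Q.2 v w
    by_cases h1 : v = a ∧ w = b <;> by_cases h2 : v = b ∧ w = a <;>
    by_cases h3 : w = a ∧ v = b <;> by_cases h4 : w = b ∧ v = a <;>
      simp_all <;> omega⟩

lemma mem_Uset_self (Q : AF ℕ) (V : Set ℕ) : Q ∈ Uset Q V := rfl

lemma Uset_eval {Q Q' : AF ℕ} {V : Set ℕ} (h : Q' ∈ Uset Q V) {a b : ℕ}
    (ha : a ∈ V) (hb : b ∈ V) : Q'.1 a b = Q.1 a b := by
  have := congrFun (congrFun h a) b
  simpa [restrictFun, ha, hb] using this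

lemma isOpen_Uset (Q : AF ℕ) (V : Set ℕ) (hV : V.Finite) :
    IsOpen[weakTop ℕ] (Uset Q V) :=
  TopologicalSpace.GenerateOpen.basic _ ⟨Q, V, hV, rfl⟩

lemma af_isOpen_ne (a b : ℕ) : IsOpen[weakTop ℕ] {Q : AF ℕ | Q.1 a b ≠ 0} := by
  letI := weakTop ℕ
  have : {Q : AF ℕ | Q.1 a b ≠ 0} =
      ⋃ Q0 ∈ {Q : AF ℕ | Q.1 a b ≠ 0}, Uset Q0 {a, b} := by
    ext Q
    constructor
    · intro hQ
      exact Set.mem_biUnion hQ (mem_Uset_self Q _)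
    · rintro ⟨_, ⟨Q0, rfl⟩, _, ⟨hQ0, rfl⟩, hQ⟩
      have := Uset_eval hQ (a := a) (b := b) (by simp) (by simp)
      simpa [this] using hQ0
  rw [this]
  exact isOpen_biUnion fun Q0 _ => isOpen_Uset Q0 _ (by simp)

lemma Uset_anti (Q : AF ℕ) {V W : Set ℕ} (hVW : V ⊆ W) : Uset Q W ⊆ Uset Q V := by
  intro Q' hQ'
  funext x y
  simp only [restrictFun]
  split_ifs with h
  · exact Uset_eval hQ' (hVW h.1) (hVW h.2)
  · rfl

lemma af_isClosed_eq (a b : ℕ) : IsClosed[weakTop ℕ] {Q : AF ℕ | Q.1 a b = 0} := by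
  letI := weakTop ℕ
  have h : {Q : AF ℕ | Q.1 a b = 0} = {Q : AF ℕ | Q.1 a b ≠ 0}ᶜ := by ext Q; simp
  rw [h]
  exact (af_isOpen_ne a b).isClosed_compl

lemma exists_Uset_subset {O : Set (AF ℕ)} (hO : IsOpen[weakTop ℕ] O) :
    ∀ Q ∈ O, ∃ V : Set ℕ, V.Finite ∧ Uset Q V ⊆ O := by
  induction hO with
  | basic U hU =>
    obtain ⟨Q0, V, hV, rfl⟩ := hU
    intro Q hQ
    refine ⟨V, hV, fun Q' hQ' => ?_⟩
    simp only [Uset, Set.mem_setOf_eq] at *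
    rw [hQ', hQ]
  | univ => exact fun Q _ => ⟨∅, Set.finite_empty, fun _ _ => trivial⟩
  | inter U₁ U₂ _ _ ih₁ ih₂ =>
    intro Q hQ
    obtain ⟨V₁, hV₁, hs₁⟩ := ih₁ Q hQ.1
    obtain ⟨V₂, hV₂, hs₂⟩ := ih₂ Q hQ.2
    refine ⟨V₁ ∪ V₂, hV₁.union hV₂, fun Q' hQ' =>
      ⟨hs₁ (Uset_anti Q Set.subset_union_left hQ'),
       hs₂ (Uset_anti Q Set.subset_union_right hQ')⟩⟩
  | sUnion S _ ih =>
    intro Q hQ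
    obtain ⟨U, hU, hQU⟩ := hQ
    obtain ⟨V, hV, hs⟩ := ih U hU Q hQU
    exact ⟨V, hV, fun Q' hQ' => ⟨U, hU, hs hQ'⟩⟩

/-- `LF^ℕ` with the subspace topology inherited from the weak topology on `AF^ℕ`
is not a Polish space. -/
theorem lf_weak_not_polish :
    ¬ @PolishSpace {Q : AF ℕ // Q ∈ LFset ℕ}
      (TopologicalSpace.induced (Subtype.val : {Q : AF ℕ // Q ∈ LFset ℕ} → AF ℕ)
        (weakTop ℕ)) := by
  letI tAF : TopologicalSpace (AF ℕ) := weakTop ℕ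
  letI tS : TopologicalSpace {Q : AF ℕ // Q ∈ LFset ℕ} :=
    TopologicalSpace.induced Subtype.val (weakTop ℕ)
  intro hp
  haveI := hp
  have hzero : (⟨fun _ _ => 0, fun a b => by simp⟩ : AF ℕ) ∈ LFset ℕ := by
    intro x; simp [LFset]
  haveI : Nonempty {Q : AF ℕ // Q ∈ LFset ℕ} := ⟨⟨_, hzero⟩⟩
  letI := TopologicalSpace.upgradeIsCompletelyMetrizable {Q : AF ℕ // Q ∈ LFset ℕ}
  set C : ℕ → Set {Q : AF ℕ // Q ∈ LFset ℕ} :=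
    fun N => {Q | ∀ y, N ≤ y → Q.1.1 0 y = 0} with hC
  have hC_closed : ∀ N, IsClosed (C N) := by
    intro N
    have : C N = Subtype.val ⁻¹' (⋂ y, {Q : AF ℕ | N ≤ y → Q.1 0 y = 0}) := by
      ext Q; simp [hC]
    rw [this]
    refine IsClosed.preimage continuous_induced_dom ?_
    refine isClosed_iInter fun y => ?_
    by_cases h : N ≤ y
    · have : {Q : AF ℕ | N ≤ y → Q.1 0 y = 0} = {Q : AF ℕ | Q.1 0 y = 0} := by
        ext Q; simp [h]
      rw [this]; exact af_isClosed_eq 0 y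
    · have : {Q : AF ℕ | N ≤ y → Q.1 0 y = 0} = Set.univ := by
        ext Q; simp [h]
      rw [this]; exact isClosed_univ
  have hC_union : ⋃ N, C N = Set.univ := by
    ext Q
    simp only [Set.mem_iUnion, Set.mem_univ, iff_true]
    have hfin : {y : ℕ | Q.1.1 0 y ≠ 0}.Finite := Q.2 0
    obtain ⟨M, hM⟩ := hfin.bddAbove
    refine ⟨M + 1, fun y hy => ?_⟩
    by_contra hne
    exact absurd (hM hne) (by omega)
  obtain ⟨N, Q0, hQ0⟩ := nonempty_interior_of_iUnion_of_closed hC_closed hC_union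
  obtain ⟨O, hO, hOeq⟩ := isOpen_induced_iff.mp (isOpen_interior (s := C N))
  have hQ0O : Q0.1 ∈ O := by rw [← Set.mem_preimage, hOeq]; exact hQ0
  obtain ⟨V, hVfin, hVsub⟩ := exists_Uset_subset hO Q0.1 hQ0O
  obtain ⟨M, hM⟩ := hVfin.bddAbove
  set y : ℕ := max N M + 1 with hy
  have hyN : N ≤ y := by omega
  have hyV : y ∉ V := fun h => absurd (hM h) (by omega)
  have hy0 : (0 : ℕ) ≠ y := by omega
  set Q' : AF ℕ := addEdge Q0.1 0 y hy0 with hQ'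
  have hQ'U : Q' ∈ Uset Q0.1 V := by
    funext a b
    simp only [restrictFun]
    split_ifs with h
    · have ha : ¬(a = 0 ∧ b = y) := fun hh => hyV (hh.2 ▸ h.2)
      have hb : ¬(a = y ∧ b = 0) := fun hh => hyV (hh.1 ▸ h.1)
      simp [hQ', addEdge, ha, hb]
    · rfl
  have hQ'LF : Q' ∈ LFset ℕ := by
    intro x
    have hsub : {w : ℕ | Q'.1 x w ≠ 0} ⊆ {w : ℕ | Q0.1.1 x w ≠ 0} ∪ {0, y} := by
      intro w hw
      simp only [Set.mem_setOf_eq, hQ', addEdge] at hw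
      by_cases h1 : x = 0 ∧ w = y
      · right; simp [h1.2]
      · by_cases h2 : x = y ∧ w = 0
        · right; simp [h2.2]
        · left; simpa [h1, h2] using hw
    exact ((Q0.2 x).union ((Set.finite_singleton y).insert 0)).subset hsub
  have : (⟨Q', hQ'LF⟩ : {Q : AF ℕ // Q ∈ LFset ℕ}) ∈ C N := by
    have : (⟨Q', hQ'LF⟩ : {Q : AF ℕ // Q ∈ LFset ℕ}) ∈ interior (C N) := by
      rw [← hOeq]; exact hVsub hQ'U
    exact interior_subset this
  have h1 : Q'.1 0 y = 0 := this y hyN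
  have h2 : Q'.1 0 y = 1 := by simp [hQ', addEdge]
  omega
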